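/- Let d ∈ ℕ with d ≥ 2, κ ∈ ℝ \ {0}, and Λ ∈ ℝ. Let X_1, …, X_d : ℝ → ℝ be twice differentiable with X_l(t) > 0 for all t, let φ be differentiable, and let ρ, p : ℝ → ℝ and V : ℝ → ℝ satisfy the Bianchi I Einstein equations (I_0), (I_1), …, (I_d) for all t ∈ ℝ. Let ν ∈ ℝ \ {0} and set R = (X_1⋯X_d)^ν. Let θ > 0 and q ∈ ℝ \ {0}, and let τ satisfy τ'(t) = θ R(t)^q for all t with differentiable inverse f (f(τ(t)) = t). Then: (a) the function t ↦ X_1(t)²⋯X_d(t)² · Σ_{1≤l<k≤d}(H_l(t) − H_k(t))² is constant on ℝ, where H_l = X_l'/X_l; write its value as 2dκD. (b) With Y(s) = R(f(s))^q, φ̃ = φ∘f, Q(s) = (qνdκ/(d−1)) φ̃'(s)², ρ̃ = ρ∘f, and p̃ = p∘f, for every t ∈ ℝ, at s = τ(t) the function Y is twice differentiable and satisfies Y''(s) + Q(s)Y(s) = −2qνdκD/(θ²(d−1) Y(s)^{(2+qν)/(qν)}) − qνdκ(ρ̃(s) + p̃(s))/(θ²(d−1) Y(s)). -/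

import Mathlib

open Finset

lemma sym_pairs {d : ℕ} (F : Fin d → Fin d → ℝ) (hsymm : ∀ l k, F l k = F k l) :
    2 * (∑ pr ∈ Finset.univ.filter (fun pr : Fin d × Fin d => pr.1 < pr.2), F pr.1 pr.2)
      = (∑ l, ∑ k, F l k) - ∑ l, F l l := by
  have hlt : ∑ pr ∈ Finset.univ.filter (fun pr : Fin d × Fin d => pr.1 < pr.2), F pr.1 pr.2
      = ∑ l, ∑ k, if l < k then F l k else 0 := by
    rw [Finset.sum_filter, Fintype.sum_prod_type]
  have h2 : ∑ l, ∑ k, (if l < k then F l k else 0) = ∑ l, ∑ k, (if k < l then F l k else 0) := by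
    rw [Finset.sum_comm]
    exact Finset.sum_congr rfl fun l _ => Finset.sum_congr rfl fun k _ => by
      by_cases h : k < l <;> simp [h, hsymm l k]
  have h3 : ∑ l : Fin d, ∑ k, (if l = k then F l k else 0) = ∑ l, F l l := by
    refine Finset.sum_congr rfl fun l _ => ?_
    rw [Finset.sum_ite_eq]; simp
  have h4 : ∑ l : Fin d, ∑ k, F l k
      = ∑ l, ∑ k, ((if l < k then F l k else 0) + (if k < l then F l k else 0)
          + (if l = k then F l k else 0)) := by
    refine Finset.sum_congr rfl fun l _ => Finset.sum_congr rfl fun k _ => ?_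
    rcases lt_trichotomy l k with h | h | h
    · simp [h, asymm h, h.ne]
    · simp [h, lt_irrefl]
    · simp [h, asymm h, h.ne']
  simp only [Finset.sum_add_distrib] at h4
  rw [hlt]; linarith

lemma pair_mul_sum {d : ℕ} (g : Fin d → ℝ) :
    ∑ pr ∈ Finset.univ.filter (fun pr : Fin d × Fin d => pr.1 < pr.2), g pr.1 * g pr.2
      = ((∑ l, g l) ^ 2 - ∑ l, g l ^ 2) / 2 := by
  have h := sym_pairs (fun l k => g l * g k) (fun l k => mul_comm _ _)
  have h1 : ∑ l, ∑ k, g l * g k = (∑ l, g l) ^ 2 := by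
    rw [sq, Finset.sum_mul_sum]
  have h2 : ∑ l : Fin d, g l * g l = ∑ l, g l ^ 2 :=
    Finset.sum_congr rfl fun l _ => (sq (g l)).symm
  simp only [h1, h2] at h
  linarith

lemma pair_sq_sum {d : ℕ} (g : Fin d → ℝ) :
    ∑ pr ∈ Finset.univ.filter (fun pr : Fin d × Fin d => pr.1 < pr.2), (g pr.1 - g pr.2) ^ 2
      = (d : ℝ) * (∑ l, g l ^ 2) - (∑ l, g l) ^ 2 := by
  have h := sym_pairs (fun l k => (g l - g k) ^ 2) (fun l k => by ring)
  have h1 : ∑ l : Fin d, ∑ k, (g l - g k) ^ 2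
      = 2 * ((d : ℝ) * ∑ l, g l ^ 2) - 2 * (∑ l, g l) ^ 2 := by
    have hin : ∀ l, ∑ k, (g l - g k) ^ 2
        = (d : ℝ) * g l ^ 2 - 2 * g l * (∑ k, g k) + ∑ k, g k ^ 2 := by
      intro l
      have : ∀ k, (g l - g k) ^ 2 = g l ^ 2 - 2 * g l * g k + g k ^ 2 := fun k => by ring
      rw [Finset.sum_congr rfl fun k _ => this k]
      rw [Finset.sum_add_distrib, Finset.sum_sub_distrib, Finset.sum_const, ← Finset.mul_sum]
      simp [Finset.card_univ, nsmul_eq_mul]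
    rw [Finset.sum_congr rfl fun l _ => hin l]
    rw [Finset.sum_add_distrib, Finset.sum_sub_distrib, ← Finset.sum_mul, Finset.sum_const,
      ← Finset.mul_sum]
    simp only [Finset.card_univ, Fintype.card_fin, nsmul_eq_mul]
    rw [← Finset.mul_sum]; ring
  simp only [h1, sub_self] at h
  norm_num at h
  linarith

lemma sum_ne_fin {d : ℕ} (i : Fin d) (c : Fin d → ℝ) :
    ∑ l ∈ Finset.univ.filter (fun l => l ≠ i), c l = (∑ l, c l) - c i := by
  rw [Finset.filter_ne', Finset.sum_erase_eq_sub (Finset.mem_univ i)]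

lemma sum_restrict {d : ℕ} (i : Fin d) (g : Fin d → ℝ) :
    ∑ l, (if l ≠ i then g l else 0) = (∑ l, g l) - g i := by
  have : ∀ l : Fin d, (if l ≠ i then g l else 0) = g l - (if l = i then g l else 0) := by
    intro l; by_cases h : l = i <;> simp [h]
  rw [Finset.sum_congr rfl fun l _ => this l, Finset.sum_sub_distrib,
    Finset.sum_ite_eq' Finset.univ i g]
  simp

lemma pair_mul_sum_ne {d : ℕ} (i : Fin d) (g : Fin d → ℝ) :
    ∑ pr ∈ Finset.univ.filter (fun pr : Fin d × Fin d => pr.1 < pr.2 ∧ pr.1 ≠ i ∧ pr.2 ≠ i),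
        g pr.1 * g pr.2
      = (((∑ l, g l) - g i) ^ 2 - ((∑ l, g l ^ 2) - g i ^ 2)) / 2 := by
  set g' : Fin d → ℝ := fun l => if l ≠ i then g l else 0 with hg'
  have h1 : ∑ pr ∈ Finset.univ.filter
        (fun pr : Fin d × Fin d => pr.1 < pr.2 ∧ pr.1 ≠ i ∧ pr.2 ≠ i), g pr.1 * g pr.2
      = ∑ pr ∈ Finset.univ.filter (fun pr : Fin d × Fin d => pr.1 < pr.2), g' pr.1 * g' pr.2 := by
    rw [Finset.sum_filter, Finset.sum_filter]
    refine Finset.sum_congr rfl fun pr _ => ?_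
    by_cases hlt : pr.1 < pr.2 <;> by_cases h2 : pr.1 = i <;> by_cases h3 : pr.2 = i <;>
      simp [g', hlt, h2, h3]
  have h2 : ∑ l, g' l = (∑ l, g l) - g i := sum_restrict i g
  have h3 : ∑ l, g' l ^ 2 = (∑ l, g l ^ 2) - g i ^ 2 := by
    have hsq : ∀ l : Fin d, g' l ^ 2 = (if l ≠ i then g l ^ 2 else 0) := by
      intro l; by_cases h : l = i <;> simp [g', h]
    rw [Finset.sum_congr rfl fun l _ => hsq l, sum_restrict i (fun l => g l ^ 2)]
  rw [h1, pair_mul_sum g', h2, h3]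

set_option maxHeartbeats 1000000 in
/-- Bianchi I Einstein equations imply a generalized EMP equation. -/
theorem stmt_13
    (d : ℕ) (hd : 2 ≤ d) (κ Λ : ℝ) (hκ : κ ≠ 0)
    (X : Fin d → ℝ → ℝ) (φ ρ p V : ℝ → ℝ)
    (hX : ∀ l, Differentiable ℝ (X l)) (hX' : ∀ l, Differentiable ℝ (deriv (X l)))
    (hXpos : ∀ l t, 0 < X l t)
    (hφ : Differentiable ℝ φ)
    (H : Fin d → ℝ → ℝ) (hH : ∀ l t, H l t = deriv (X l) t / X l t)
    (hI0 : ∀ t, (∑ pr ∈ Finset.univ.filter (fun pr : Fin d × Fin d => pr.1 < pr.2),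
          H pr.1 t * H pr.2 t)
        = κ * ((deriv φ t) ^ 2 / 2 + V (φ t) + ρ t) + Λ)
    (hIi : ∀ i : Fin d, ∀ t,
        (∑ l ∈ Finset.univ.filter (fun l => l ≠ i), (deriv (H l) t + H l t ^ 2))
          + (∑ pr ∈ Finset.univ.filter
              (fun pr : Fin d × Fin d => pr.1 < pr.2 ∧ pr.1 ≠ i ∧ pr.2 ≠ i),
              H pr.1 t * H pr.2 t)
        = -κ * ((deriv φ t) ^ 2 / 2 - V (φ t) + p t) + Λ)
    (ν : ℝ) (hν : ν ≠ 0)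
    (R : ℝ → ℝ) (hR : ∀ t, R t = (∏ l, X l t) ^ ν)
    (θ q : ℝ) (hθ : 0 < θ) (hq : q ≠ 0)
    (τ f : ℝ → ℝ)
    (hτ : ∀ t, deriv τ t = θ * R t ^ q)
    (hf : Differentiable ℝ f) (hfτ : ∀ t, f (τ t) = t)
    (Y φt Q : ℝ → ℝ)
    (hY : ∀ s, Y s = R (f s) ^ q)
    (hφt : ∀ s, φt s = φ (f s))
    (hQ : ∀ s, Q s = (q * ν * (d : ℝ) * κ / ((d : ℝ) - 1)) * (deriv φt s) ^ 2) :
    (∀ t₁ t₂,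
      (∏ l, X l t₁) ^ 2 *
          (∑ pr ∈ Finset.univ.filter (fun pr : Fin d × Fin d => pr.1 < pr.2),
            (H pr.1 t₁ - H pr.2 t₁) ^ 2)
        = (∏ l, X l t₂) ^ 2 *
          (∑ pr ∈ Finset.univ.filter (fun pr : Fin d × Fin d => pr.1 < pr.2),
            (H pr.1 t₂ - H pr.2 t₂) ^ 2)) ∧
    ∀ D : ℝ,
      (∀ t, (∏ l, X l t) ^ 2 *
          (∑ pr ∈ Finset.univ.filter (fun pr : Fin d × Fin d => pr.1 < pr.2),
            (H pr.1 t - H pr.2 t) ^ 2) = 2 * (d : ℝ) * κ * D) →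
      ∀ t, DifferentiableAt ℝ Y (τ t) ∧ DifferentiableAt ℝ (deriv Y) (τ t) ∧
        deriv (deriv Y) (τ t) + Q (τ t) * Y (τ t)
          = -(2 * q * ν * (d : ℝ) * κ * D)
              / (θ ^ 2 * ((d : ℝ) - 1) * Y (τ t) ^ ((2 + q * ν) / (q * ν)))
            - q * ν * (d : ℝ) * κ * (ρ (f (τ t)) + p (f (τ t)))
              / (θ ^ 2 * ((d : ℝ) - 1) * Y (τ t)) := by
  -- basic objects
  set P : ℝ → ℝ := fun t => ∏ l, X l t with hPdef
  have hPpos : ∀ t, 0 < P t := fun t => Finset.prod_pos fun l _ => hXpos l t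
  have hXne : ∀ l t, X l t ≠ 0 := fun l t => (hXpos l t).ne'
  have hHfun : ∀ l, H l = fun t => deriv (X l) t / X l t := fun l => funext (hH l)
  have hHdiff : ∀ l, Differentiable ℝ (H l) := by
    intro l; rw [hHfun l]
    exact (hX' l).div (hX l) (fun t => hXne l t)
  have hXder : ∀ l t, HasDerivAt (X l) (X l t * H l t) t := by
    intro l t
    have h := ((hX l) t).hasDerivAt
    have : deriv (X l) t = X l t * H l t := by
      rw [hH l t]
      field_simp
      rw [mul_div_cancel_right₀ _ (hXne l t)]
    rwa [this] at h
  have hPder : ∀ t, HasDerivAt P (P t * ∑ l, H l t) t := by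
    intro t
    have h := HasDerivAt.fun_finsetProd (u := Finset.univ) (f := X)
      (f' := fun l => X l t * H l t) (x := t) (fun l _ => hXder l t)
    have he : (∑ l : Fin d, (∏ j ∈ Finset.univ.erase l, X j t) • (X l t * H l t))
        = P t * ∑ l, H l t := by
      rw [Finset.mul_sum]
      refine Finset.sum_congr rfl fun l _ => ?_
      rw [smul_eq_mul, ← mul_assoc, Finset.prod_erase_mul _ _ (Finset.mem_univ l)]
    rwa [he] at h
  have hPdiff : Differentiable ℝ P := fun t => (hPder t).differentiableAt
  -- rewritten Einstein equations
  have hIi' : ∀ i t,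
      ((∑ l, deriv (H l) t) + (∑ l, H l t ^ 2) - deriv (H i) t - H i t ^ 2)
        + ((((∑ l, H l t) - H i t) ^ 2 - ((∑ l, H l t ^ 2) - H i t ^ 2)) / 2)
      = -κ * ((deriv φ t) ^ 2 / 2 - V (φ t) + p t) + Λ := by
    intro i t
    have h := hIi i t
    rw [sum_ne_fin i (fun l => deriv (H l) t + H l t ^ 2),
      pair_mul_sum_ne i (fun l => H l t), Finset.sum_add_distrib] at h
    linarith
  -- pairwise identity : (H l - H k)' + G (H l - H k) = 0
  have hpair : ∀ (l k : Fin d) (t : ℝ),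
      deriv (H l) t - deriv (H k) t + (∑ m, H m t) * (H l t - H k t) = 0 := by
    intro l k t
    linear_combination (hIi' k t) - (hIi' l t)
  -- part (a)
  have hW : ∀ (l k : Fin d) (t₁ t₂ : ℝ),
      P t₁ * (H l t₁ - H k t₁) = P t₂ * (H l t₂ - H k t₂) := by
    intro l k t₁ t₂
    have hdiff : Differentiable ℝ (fun t => P t * (H l t - H k t)) :=
      hPdiff.mul ((hHdiff l).sub (hHdiff k))
    have hzero : ∀ t, deriv (fun t => P t * (H l t - H k t)) t = 0 := by
      intro t
      have hW' : HasDerivAt (fun t => P t * (H l t - H k t))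
          ((P t * ∑ m, H m t) * (H l t - H k t)
            + P t * (deriv (H l) t - deriv (H k) t)) t :=
        (hPder t).mul ((((hHdiff l) t).hasDerivAt).sub (((hHdiff k) t).hasDerivAt))
      rw [hW'.deriv]
      linear_combination (P t) * hpair l k t
    exact is_const_of_deriv_eq_zero hdiff hzero t₁ t₂
  have parta : ∀ t₁ t₂,
      (∏ l, X l t₁) ^ 2 *
          (∑ pr ∈ Finset.univ.filter (fun pr : Fin d × Fin d => pr.1 < pr.2),
            (H pr.1 t₁ - H pr.2 t₁) ^ 2)
        = (∏ l, X l t₂) ^ 2 *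
          (∑ pr ∈ Finset.univ.filter (fun pr : Fin d × Fin d => pr.1 < pr.2),
            (H pr.1 t₂ - H pr.2 t₂) ^ 2) := by
    intro t₁ t₂
    have hrw : ∀ t : ℝ, (∏ l, X l t) ^ 2 *
        (∑ pr ∈ Finset.univ.filter (fun pr : Fin d × Fin d => pr.1 < pr.2),
          (H pr.1 t - H pr.2 t) ^ 2)
        = ∑ pr ∈ Finset.univ.filter (fun pr : Fin d × Fin d => pr.1 < pr.2),
          (P t * (H pr.1 t - H pr.2 t)) ^ 2 := by
      intro t
      rw [Finset.mul_sum]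
      exact Finset.sum_congr rfl fun pr _ => by rw [mul_pow]
    rw [hrw t₁, hrw t₂]
    exact Finset.sum_congr rfl fun pr _ => by rw [hW pr.1 pr.2 t₁ t₂]
  refine ⟨parta, ?_⟩
  -- key scalar identity
  have hd1 : (1:ℝ) ≤ (d:ℝ) := by exact_mod_cast Nat.one_le_of_lt hd
  have hd1ne : (d:ℝ) - 1 ≠ 0 := by
    have : (2:ℝ) ≤ (d:ℝ) := by exact_mod_cast hd
    linarith
  have keyE : ∀ t, ((d:ℝ) - 1) * (∑ l, deriv (H l) t)
      + (d:ℝ) * κ * (deriv φ t) ^ 2 + (d:ℝ) * κ * (ρ t + p t)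
      + ((d:ℝ) * (∑ l, H l t ^ 2) - (∑ l, H l t) ^ 2) = 0 := by
    intro t
    have h0 := hI0 t
    rw [pair_mul_sum (fun l => H l t)] at h0
    have hs : ∑ i : Fin d,
        (((∑ l, deriv (H l) t) + (∑ l, H l t ^ 2) - deriv (H i) t - H i t ^ 2)
          + ((((∑ l, H l t) - H i t) ^ 2 - ((∑ l, H l t ^ 2) - H i t ^ 2)) / 2))
        = (d:ℝ) * (-κ * ((deriv φ t) ^ 2 / 2 - V (φ t) + p t) + Λ) := by
      rw [Finset.sum_congr rfl fun i _ => hIi' i t, Finset.sum_const]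
      simp only [Finset.card_univ, Fintype.card_fin, nsmul_eq_mul]
    have hexp : ∑ i : Fin d,
        (((∑ l, deriv (H l) t) + (∑ l, H l t ^ 2) - deriv (H i) t - H i t ^ 2)
          + ((((∑ l, H l t) - H i t) ^ 2 - ((∑ l, H l t ^ 2) - H i t ^ 2)) / 2))
        = (d:ℝ) * ((∑ l, deriv (H l) t) + (∑ l, H l t ^ 2)
            + ((∑ l, H l t) ^ 2 - (∑ l, H l t ^ 2)) / 2)
          - (∑ l, deriv (H l) t) - (∑ l, H l t) * (∑ l, H l t) := by
      have hpt : ∀ i : Fin d,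
          (((∑ l, deriv (H l) t) + (∑ l, H l t ^ 2) - deriv (H i) t - H i t ^ 2)
            + ((((∑ l, H l t) - H i t) ^ 2 - ((∑ l, H l t ^ 2) - H i t ^ 2)) / 2))
          = ((∑ l, deriv (H l) t) + (∑ l, H l t ^ 2)
              + ((∑ l, H l t) ^ 2 - (∑ l, H l t ^ 2)) / 2)
            - (deriv (H i) t + (∑ l, H l t) * H i t) := fun i => by ring
      rw [Finset.sum_congr rfl fun i _ => hpt i, Finset.sum_sub_distrib,
        Finset.sum_const, Finset.sum_add_distrib, ← Finset.mul_sum]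
      simp [Finset.card_univ, nsmul_eq_mul]
      ring
    rw [hexp] at hs
    linear_combination hs - (d:ℝ) * h0
  intro D hD t
  have ha : q * ν ≠ 0 := mul_ne_zero hq hν
  have hRP : ∀ u, R u ^ q = P u ^ (q * ν) := by
    intro u
    rw [hR u, ← Real.rpow_mul (hPpos u).le, mul_comm ν q]
  have hYP : ∀ s, Y s = P (f s) ^ (q * ν) := fun s => by rw [hY s, hRP]
  have hτ' : ∀ u, deriv τ u = θ * P u ^ (q * ν) := fun u => by rw [hτ u, hRP]
  have hτpos : ∀ u, 0 < deriv τ u := fun u => by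
    rw [hτ' u]; exact mul_pos hθ (Real.rpow_pos_of_pos (hPpos u) _)
  have hτdiff : Differentiable ℝ τ := by
    intro u
    by_contra hc
    exact (hτpos u).ne' (deriv_zero_of_not_differentiableAt hc)
  have hτder : ∀ u, HasDerivAt τ (θ * P u ^ (q * ν)) u := fun u => by
    have h := (hτdiff u).hasDerivAt; rwa [hτ' u] at h
  have hmono : StrictMono τ := strictMono_of_deriv_pos hτpos
  have hGder : ∀ u, HasDerivAt (fun w => ∑ l, H l w) (∑ l, deriv (H l) u) u := fun u =>
    HasDerivAt.fun_sum fun l _ => ((hHdiff l) u).hasDerivAt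
  have hPfder : ∀ s, HasDerivAt (fun w => P (f w))
      ((P (f s) * ∑ l, H l (f s)) * deriv f s) s := fun s =>
    (hPder (f s)).comp s ((hf s).hasDerivAt)
  have hYder : ∀ s, HasDerivAt Y
      ((q * ν) * P (f s) ^ (q * ν - 1) * ((P (f s) * ∑ l, H l (f s)) * deriv f s)) s := by
    intro s
    have hcomp := (Real.hasDerivAt_rpow_const (x := P (f s)) (p := q * ν)
      (Or.inl (hPpos (f s)).ne')).comp s (hPfder s)
    have hYfun : Y = fun s => P (f s) ^ (q * ν) := funext hYP
    rw [hYfun]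
    simpa [Function.comp_def] using hcomp
  have hfpt : ∀ u, deriv f (τ u) = 1 / (θ * P u ^ (q * ν)) := by
    intro u
    have h1 : HasDerivAt (fun w => f (τ w)) (deriv f (τ u) * (θ * P u ^ (q * ν))) u :=
      ((hf (τ u)).hasDerivAt).comp u (hτder u)
    have h2 : HasDerivAt (fun w => f (τ w)) 1 u := by
      have hid : (fun w => f (τ w)) = id := funext hfτ
      rw [hid]; exact hasDerivAt_id u
    have h3 := h1.unique h2
    have hne : θ * P u ^ (q * ν) ≠ 0 :=
      (mul_pos hθ (Real.rpow_pos_of_pos (hPpos u) _)).ne'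
    rw [eq_div_iff hne]
    linarith [h3]
  -- local surjectivity of τ around τ t
  have hIopen : IsOpen (Set.Ioo (τ (t - 1)) (τ (t + 1))) := isOpen_Ioo
  have hmemI : τ t ∈ Set.Ioo (τ (t - 1)) (τ (t + 1)) :=
    ⟨hmono (by linarith), hmono (by linarith)⟩
  have hsur : ∀ s ∈ Set.Ioo (τ (t - 1)) (τ (t + 1)), τ (f s) = s := by
    intro s hs
    have hsub : Set.Ioo (τ (t - 1)) (τ (t + 1)) ⊆ τ '' Set.Ioo (t - 1) (t + 1) :=
      intermediate_value_Ioo (by linarith) (hτdiff.continuous.continuousOn)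
    obtain ⟨u, _, hus⟩ := hsub hs
    rw [← hus, hfτ u]
  have hfI : ∀ s ∈ Set.Ioo (τ (t - 1)) (τ (t + 1)),
      deriv f s = 1 / (θ * P (f s) ^ (q * ν)) := by
    intro s hs
    have h1 : HasDerivAt (fun w => τ (f w)) (θ * P (f s) ^ (q * ν) * deriv f s) s :=
      (hτder (f s)).comp s ((hf s).hasDerivAt)
    have h2 : HasDerivAt (fun w => τ (f w)) 1 s := by
      have hev : (fun w => τ (f w)) =ᶠ[nhds s] id :=
        Filter.eventuallyEq_of_mem (hIopen.mem_nhds hs) hsur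
      exact (hasDerivAt_id s).congr_of_eventuallyEq hev
    have h3 := h1.unique h2
    have hne : θ * P (f s) ^ (q * ν) ≠ 0 :=
      (mul_pos hθ (Real.rpow_pos_of_pos (hPpos (f s)) _)).ne'
    rw [eq_div_iff hne]
    linarith [h3]
  have hYZ : Set.EqOn (deriv Y) (fun s => (q * ν / θ) * ∑ l, H l (f s))
      (Set.Ioo (τ (t - 1)) (τ (t + 1))) := by
    intro s hs
    rw [(hYder s).deriv, hfI s hs]
    have hpa : P (f s) ^ (q * ν - 1) * P (f s) = P (f s) ^ (q * ν) := by
      rw [← Real.rpow_add_one (hPpos (f s)).ne' (q * ν - 1)]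
      ring_nf
    have hpane : P (f s) ^ (q * ν) ≠ 0 := (Real.rpow_pos_of_pos (hPpos (f s)) _).ne'
    field_simp
    linear_combination (∑ l, H l (f s)) * hpa
  have hev : deriv Y =ᶠ[nhds (τ t)] (fun s => (q * ν / θ) * ∑ l, H l (f s)) :=
    Filter.eventuallyEq_of_mem (hIopen.mem_nhds hmemI) hYZ
  have hZder : HasDerivAt (fun s => (q * ν / θ) * ∑ l, H l (f s))
      ((q * ν / θ) * ((∑ l, deriv (H l) (f (τ t))) * deriv f (τ t))) (τ t) :=
    (((hGder (f (τ t))).comp (τ t) ((hf (τ t)).hasDerivAt))).const_mul _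
  have hdY1 : DifferentiableAt ℝ Y (τ t) := (hYder (τ t)).differentiableAt
  have hdY2 : DifferentiableAt ℝ (deriv Y) (τ t) := by
    exact (Filter.EventuallyEq.differentiableAt_iff hev).mpr hZder.differentiableAt
  refine ⟨hdY1, hdY2, ?_⟩
  have hddY : deriv (deriv Y) (τ t)
      = (q * ν / θ) * ((∑ l, deriv (H l) t) * deriv f (τ t)) := by
    rw [hev.deriv_eq, hZder.deriv, hfτ t]
  have hφtder : deriv φt (τ t) = deriv φ t * deriv f (τ t) := by
    have hc : HasDerivAt φt (deriv φ (f (τ t)) * deriv f (τ t)) (τ t) := by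
      have hφtf : φt = fun s => φ (f s) := funext hφt
      rw [hφtf]
      exact ((hφ (f (τ t))).hasDerivAt).comp (τ t) ((hf (τ t)).hasDerivAt)
    rw [hc.deriv, hfτ t]
  have hYv : Y (τ t) = P t ^ (q * ν) := by rw [hYP, hfτ t]
  have hpow : (P t ^ (q * ν)) ^ ((2 + q * ν) / (q * ν)) = P t ^ (q * ν) * (P t) ^ 2 := by
    rw [← Real.rpow_mul (hPpos t).le,
      show (q * ν) * ((2 + q * ν) / (q * ν)) = (q * ν) + 2 by field_simp; ring,
      Real.rpow_add (hPpos t),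
      show ((2:ℝ)) = ((2:ℕ):ℝ) by norm_num, Real.rpow_natCast]
  have hDt : (P t) ^ 2 * ((d:ℝ) * (∑ l, H l t ^ 2) - (∑ l, H l t) ^ 2)
      = 2 * (d:ℝ) * κ * D := by
    have h := hD t; rwa [pair_sq_sum (fun l => H l t)] at h
  have hdne : (d:ℝ) ≠ 0 := Nat.cast_ne_zero.mpr (by omega)
  have hE := keyE t
  have hpane : P t ^ (q * ν) ≠ 0 := (Real.rpow_pos_of_pos (hPpos t) _).ne'
  rw [hQ (τ t), hφtder, hddY, hYv, hfpt t, hpow, hfτ t]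
  field_simp [hθ.ne', hd1ne, hpane, (hPpos t).ne']
  linear_combination (P t)^2 * hE - hDt
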